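/- Let θ be the primitive random substitution θ(a) = {aa, ab}, θ(b) = {ba}. Then the topological entropy of X_θ equals the series Σ_{n=1}^∞ 2^{-n} log n. -/

import Mathlib

open Filter Topology

namespace RandSub

variable {A : Type*} [DecidableEq A]

/-- Extension of a substitution to words: set of all concatenations of realisations. -/
def wordSubst (θ : A → Finset (List A)) : List A → Finset (List A)
  | [] => {([] : List A)}
  | a :: u => (θ a).biUnion fun v => (wordSubst θ u).image fun w => v ++ w

/-- Powers of a random substitution: `substPow θ m a` is the set of realisations of `θ^m(a)`. -/
def substPow (θ : A → Finset (List A)) : ℕ → A → Finset (List A)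
  | 0, a => {[a]}
  | m + 1, a => (substPow θ m a).biUnion fun v => wordSubst θ v

/-- `θ^m` applied to a word. -/
def wordSubstPow (θ : A → Finset (List A)) (m : ℕ) (u : List A) : Finset (List A) :=
  wordSubst (fun a => substPow θ m a) u

/-- A word is θ-legal if it occurs as a subword of some realisation of some `θ^k(a)`. -/
def IsLegal (θ : A → Finset (List A)) (u : List A) : Prop :=
  ∃ (a : A) (k : ℕ) (w : List A), w ∈ substPow θ k a ∧ u <:+: w

/-- The finite subword of a bi-infinite sequence `x` of length `n` starting at position `i`. -/
def wordAt {B : Type*} (x : ℤ → B) (i : ℤ) (n : ℕ) : List B :=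
  (List.range n).map fun j => x (i + j)

/-- The subshift associated with a random substitution. -/
def substShift (θ : A → Finset (List A)) : Set (ℤ → A) :=
  {x | ∀ (i : ℤ) (n : ℕ), IsLegal θ (wordAt x i n)}

/-- The language of a subshift. -/
def lang {B : Type*} (X : Set (ℤ → B)) : Set (List B) :=
  {u | ∃ x ∈ X, ∃ i : ℤ, u = wordAt x i u.length}

/-- The complexity function of a subshift. -/
noncomputable def complexity {B : Type*} (X : Set (ℤ → B)) (n : ℕ) : ℕ :=
  Nat.card {u : List B | u.length = n ∧ u ∈ lang X}

/-- Topological entropy of a subshift (defined via `limsup`; when the limit of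
`log p_X(n) / n` exists it coincides with it). -/
noncomputable def topEntropy {B : Type*} (X : Set (ℤ → B)) : ℝ :=
  Filter.atTop.limsup fun n : ℕ => Real.log (complexity X n) / n

/-- Primitivity of a random substitution. -/
def IsPrimitive (θ : A → Finset (List A)) : Prop :=
  ∃ k : ℕ, 0 < k ∧ ∀ a b : A, ∃ w ∈ substPow θ k b, a ∈ w

/-- A random substitution has constant length `ℓ`. -/
def ConstantLength (θ : A → Finset (List A)) (ℓ : ℕ) : Prop :=
  2 ≤ ℓ ∧ ∀ a : A, ∀ w ∈ θ a, w.length = ℓ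

/-- Permissible letter frequency vectors. -/
def IsPLFV (θ : A → Finset (List A)) (ν : A → ℝ) : Prop :=
  (∀ a, ν a ∈ Set.Icc (0 : ℝ) 1) ∧
  ∃ b : A, [b] ∈ lang (substShift θ) ∧
    ∃ n : ℕ → ℕ, Tendsto n atTop atTop ∧
      ∃ v : ℕ → List A, (∀ k, v k ∈ substPow θ (n k) b) ∧
        ∀ a, Tendsto (fun k => ((v k).count a : ℝ) / (v k).length) atTop (𝓝 (ν a))

end RandSub

open RandSub Filter Topology

/-- A two-letter alphabet. -/
inductive AB | a | b
  deriving DecidableEq, Repr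

instance : Fintype AB := ⟨{.a, .b}, by intro x; cases x <;> simp⟩

/-- The random substitution θ(a) = {aa, ab}, θ(b) = {ba}. -/
def theta2 : AB → Finset (List AB)
  | .a => {[.a, .a], [.a, .b]}
  | .b => {[.b, .a]}
namespace RandSub

variable {A : Type*} [DecidableEq A] {θ : A → Finset (List A)}

lemma mem_wordSubst_nil {x : List A} : x ∈ wordSubst θ [] ↔ x = [] := by
  simp [wordSubst]

lemma mem_wordSubst_cons {a : A} {u x : List A} :
    x ∈ wordSubst θ (a :: u) ↔ ∃ v ∈ θ a, ∃ w ∈ wordSubst θ u, x = v ++ w := by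
  simp only [wordSubst, Finset.mem_biUnion, Finset.mem_image]
  constructor
  · rintro ⟨v, hv, w, hw, rfl⟩; exact ⟨v, hv, w, hw, rfl⟩
  · rintro ⟨v, hv, w, hw, rfl⟩; exact ⟨v, hv, w, hw, rfl⟩

lemma mem_wordSubst_append {u v x : List A} :
    x ∈ wordSubst θ (u ++ v) ↔
      ∃ y ∈ wordSubst θ u, ∃ z ∈ wordSubst θ v, x = y ++ z := by
  induction u generalizing x with
  | nil => simp [mem_wordSubst_nil]
  | cons a u ih =>
    simp only [List.cons_append, mem_wordSubst_cons, ih]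
    constructor
    · rintro ⟨p, hp, w, ⟨y, hy, z, hz, rfl⟩, rfl⟩
      exact ⟨p ++ y, ⟨p, hp, y, hy, rfl⟩, z, hz, (List.append_assoc _ _ _).symm⟩
    · rintro ⟨w, ⟨p, hp, y, hy, rfl⟩, z, hz, rfl⟩
      exact ⟨p, hp, y ++ z, ⟨y, hy, z, hz, rfl⟩, List.append_assoc _ _ _⟩

lemma wordSubst_singleton {a : A} : wordSubst θ [a] = θ a := by
  ext x
  simp [mem_wordSubst_cons, mem_wordSubst_nil]

lemma mem_substPow_zero {a : A} {x : List A} : x ∈ substPow θ 0 a ↔ x = [a] := by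
  simp [substPow]

lemma mem_substPow_succ {m : ℕ} {a : A} {x : List A} :
    x ∈ substPow θ (m + 1) a ↔ ∃ v ∈ substPow θ m a, x ∈ wordSubst θ v := by
  simp [substPow]

lemma wordSubstPow_zero (u : List A) : wordSubstPow θ 0 u = {u} := by
  induction u with
  | nil => simp [wordSubstPow, wordSubst]
  | cons a u ih =>
    ext x
    simp only [wordSubstPow] at ih ⊢
    simp [mem_wordSubst_cons, ih, mem_substPow_zero]

lemma mem_wordSubstPow_cons {m : ℕ} {a : A} {u x : List A} :
    x ∈ wordSubstPow θ m (a :: u) ↔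
      ∃ v ∈ substPow θ m a, ∃ w ∈ wordSubstPow θ m u, x = v ++ w :=
  mem_wordSubst_cons

lemma mem_wordSubstPow_nil {m : ℕ} {x : List A} :
    x ∈ wordSubstPow θ m [] ↔ x = [] := mem_wordSubst_nil

lemma mem_wordSubstPow_append {m : ℕ} {u v x : List A} :
    x ∈ wordSubstPow θ m (u ++ v) ↔
      ∃ y ∈ wordSubstPow θ m u, ∃ z ∈ wordSubstPow θ m v, x = y ++ z :=
  mem_wordSubst_append

/-- θ^{m+1}(u) = θ(θ^m(u)) pointwise. -/
lemma mem_wordSubstPow_succ {m : ℕ} {u x : List A} :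
    x ∈ wordSubstPow θ (m + 1) u ↔ ∃ y ∈ wordSubstPow θ m u, x ∈ wordSubst θ y := by
  induction u generalizing x with
  | nil => simp [mem_wordSubstPow_nil, mem_wordSubst_nil]
  | cons a u ih =>
    simp only [mem_wordSubstPow_cons, mem_substPow_succ, ih]
    constructor
    · rintro ⟨p, ⟨w, hw, hp⟩, q, ⟨z, hz, hq⟩, rfl⟩
      exact ⟨w ++ z, ⟨w, hw, z, hz, rfl⟩, mem_wordSubst_append.2 ⟨p, hp, q, hq, rfl⟩⟩
    · rintro ⟨y, ⟨w, hw, z, hz, rfl⟩, hx⟩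
      obtain ⟨p, hp, q, hq, rfl⟩ := mem_wordSubst_append.1 hx
      exact ⟨p, ⟨w, hw, hp⟩, q, ⟨z, hz, hq⟩, rfl⟩

/-- θ^{k+m}(a) = θ^m(θ^k(a)). -/
lemma mem_substPow_add {k m : ℕ} {a : A} {x : List A} :
    x ∈ substPow θ (k + m) a ↔ ∃ v ∈ substPow θ k a, x ∈ wordSubstPow θ m v := by
  induction m generalizing x with
  | zero => simp [wordSubstPow_zero]
  | succ m ih =>
    rw [← Nat.add_assoc, mem_substPow_succ]
    constructor
    · rintro ⟨w, hw, hx⟩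
      obtain ⟨v, hv, hw'⟩ := ih.1 hw
      exact ⟨v, hv, mem_wordSubstPow_succ.2 ⟨w, hw', hx⟩⟩
    · rintro ⟨v, hv, hx⟩
      obtain ⟨y, hy, hx⟩ := mem_wordSubstPow_succ.1 hx
      exact ⟨y, ih.2 ⟨v, hv, hy⟩, hx⟩

lemma substPow_one {a : A} : substPow θ 1 a = θ a := by
  ext x
  simp [mem_substPow_succ, mem_substPow_zero, wordSubst_singleton]

lemma wordSubstPow_one (u : List A) : wordSubstPow θ 1 u = wordSubst θ u := by
  unfold wordSubstPow
  congr 1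
  funext a
  exact substPow_one

/-- Flatten characterisation of `wordSubst`. -/
lemma mem_wordSubst_iff_flatten {u x : List A} :
    x ∈ wordSubst θ u ↔
      ∃ L : List (List A), List.Forall₂ (fun c w => w ∈ θ c) u L ∧ x = L.flatten := by
  induction u generalizing x with
  | nil =>
    simp only [mem_wordSubst_nil]
    constructor
    · rintro rfl; exact ⟨[], List.Forall₂.nil, rfl⟩
    · rintro ⟨L, hL, rfl⟩; cases hL; rfl
  | cons a u ih =>
    simp only [mem_wordSubst_cons, ih]
    constructor
    · rintro ⟨v, hv, w, ⟨L, hL, rfl⟩, rfl⟩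
      exact ⟨v :: L, List.Forall₂.cons hv hL, rfl⟩
    · rintro ⟨L, hL, rfl⟩
      cases hL with
      | cons hv hL => exact ⟨_, hv, _, ⟨_, hL, rfl⟩, rfl⟩

lemma wordSubst_flatten {us bs : List (List A)}
    (h : List.Forall₂ (fun ui bi => bi ∈ wordSubst θ ui) us bs) :
    bs.flatten ∈ wordSubst θ us.flatten := by
  induction h with
  | nil => simp [mem_wordSubst_nil]
  | cons hb _ ih =>
    exact mem_wordSubst_append.2 ⟨_, hb, _, ih, rfl⟩

lemma wordSubst_nonempty (hθ : ∀ c, (θ c).Nonempty) (u : List A) :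
    (wordSubst θ u).Nonempty := by
  induction u with
  | nil => exact ⟨[], mem_wordSubst_nil.2 rfl⟩
  | cons a u ih =>
    obtain ⟨v, hv⟩ := hθ a
    obtain ⟨w, hw⟩ := ih
    exact ⟨v ++ w, mem_wordSubst_cons.2 ⟨v, hv, w, hw, rfl⟩⟩

lemma substPow_nonempty (hθ : ∀ c, (θ c).Nonempty) (m : ℕ) (a : A) :
    (substPow θ m a).Nonempty := by
  induction m with
  | zero => exact ⟨[a], mem_substPow_zero.2 rfl⟩
  | succ m ih =>
    obtain ⟨v, hv⟩ := ih
    obtain ⟨w, hw⟩ := wordSubst_nonempty hθ v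
    exact ⟨w, mem_substPow_succ.2 ⟨v, hv, hw⟩⟩

lemma wordSubstPow_nonempty (hθ : ∀ c, (θ c).Nonempty) (m : ℕ) (u : List A) :
    (wordSubstPow θ m u).Nonempty :=
  wordSubst_nonempty (fun c => substPow_nonempty hθ m c) u

lemma length_of_mem_wordSubst {ℓ : ℕ} (hθ : ∀ a, ∀ w ∈ θ a, w.length = ℓ)
    {u x : List A} (hx : x ∈ wordSubst θ u) : x.length = ℓ * u.length := by
  induction u generalizing x with
  | nil => rw [mem_wordSubst_nil.1 hx]; simp
  | cons a u ih =>
    obtain ⟨v, hv, w, hw, rfl⟩ := mem_wordSubst_cons.1 hx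
    simp [hθ a v hv, ih hw, Nat.mul_succ, Nat.add_comm]

end RandSub
open RandSub

lemma theta2_nonempty : ∀ c, (theta2 c).Nonempty := by
  intro c; cases c <;> simp [theta2]

lemma theta2_length : ∀ a : AB, ∀ w ∈ theta2 a, w.length = 2 := by
  intro a w hw
  cases a <;> simp [theta2] at hw <;> rcases hw with rfl | rfl <;> rfl

lemma length_substPow {m : ℕ} {c : AB} {w : List AB} (hw : w ∈ substPow theta2 m c) :
    w.length = 2 ^ m := by
  induction m generalizing c w with
  | zero => rw [mem_substPow_zero.1 hw]; rfl
  | succ m ih =>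
    obtain ⟨v, hv, hw⟩ := mem_substPow_succ.1 hw
    rw [length_of_mem_wordSubst theta2_length hw, ih hv]
    ring

lemma length_wordSubstPow {m : ℕ} {u x : List AB} (hx : x ∈ wordSubstPow theta2 m u) :
    x.length = 2 ^ m * u.length :=
  length_of_mem_wordSubst (fun _ w hw => length_substPow hw) hx

lemma head_substPow {m : ℕ} {c : AB} {w : List AB} (hw : w ∈ substPow theta2 m c) :
    ∃ t, w = c :: t := by
  induction m generalizing w with
  | zero => exact ⟨[], mem_substPow_zero.1 hw⟩
  | succ m ih =>
    obtain ⟨v, hv, hw⟩ := mem_substPow_succ.1 hw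
    obtain ⟨t, rfl⟩ := ih hv
    obtain ⟨p, hp, q, hq, rfl⟩ := mem_wordSubst_cons.1 hw
    cases c <;> simp [theta2] at hp <;>
      first
      | (rcases hp with rfl | rfl <;> exact ⟨_, rfl⟩)
      | (subst hp; exact ⟨_, rfl⟩)

lemma substPow_disjoint (m : ℕ) : Disjoint (substPow theta2 m .a) (substPow theta2 m .b) := by
  rw [Finset.disjoint_left]
  intro w ha hb
  obtain ⟨t, rfl⟩ := head_substPow ha
  obtain ⟨t', h⟩ := head_substPow hb
  exact absurd (List.head_eq_of_cons_eq h) (by simp)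

/-- counts -/
noncomputable def Pm (m : ℕ) : ℕ := (substPow theta2 m .a).card
noncomputable def Qm (m : ℕ) : ℕ := (substPow theta2 m .b).card

lemma card_append_blocks (F G : Finset (List AB)) (ℓ : ℕ)
    (hF : ∀ y ∈ F, y.length = ℓ) :
    (F.biUnion fun y => G.image fun z => y ++ z).card = F.card * G.card := by
  rw [Finset.card_biUnion]
  · have : ∀ y ∈ F, (G.image fun z => y ++ z).card = G.card := fun y _ =>
      Finset.card_image_of_injective _ (fun z₁ z₂ h => List.append_cancel_left h)
    rw [Finset.sum_congr rfl this]
    simp [Finset.sum_const, Nat.mul_comm]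
  · intro y₁ h₁ y₂ h₂ hne
    rw [Function.onFun, Finset.disjoint_left]
    rintro x hx₁ hx₂
    obtain ⟨z₁, -, rfl⟩ := Finset.mem_image.1 hx₁
    obtain ⟨z₂, -, h⟩ := Finset.mem_image.1 hx₂
    exact hne ((List.append_inj h.symm ((hF _ h₁).trans (hF _ h₂).symm)).1.symm).symm

lemma substPow_succ_a (m : ℕ) :
    substPow theta2 (m + 1) .a =
      ((substPow theta2 m .a).biUnion fun y => (substPow theta2 m .a).image fun z => y ++ z) ∪
      ((substPow theta2 m .a).biUnion fun y => (substPow theta2 m .b).image fun z => y ++ z) := by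
  ext x
  rw [show m + 1 = 1 + m by omega, mem_substPow_add]
  simp only [substPow_one, Finset.mem_union, Finset.mem_biUnion, Finset.mem_image]
  constructor
  · rintro ⟨v, hv, hx⟩
    simp only [theta2, Finset.mem_insert, Finset.mem_singleton] at hv
    rcases hv with rfl | rfl <;>
    · obtain ⟨y, hy, w, hw, rfl⟩ := mem_wordSubstPow_cons.1 hx
      obtain ⟨z, hz, w', hw', rfl⟩ := mem_wordSubstPow_cons.1 hw
      rw [mem_wordSubstPow_nil.1 hw']
      first
        | exact Or.inl ⟨y, hy, z, hz, by simp⟩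
        | exact Or.inr ⟨y, hy, z, hz, by simp⟩
  · rintro (⟨y, hy, z, hz, rfl⟩ | ⟨y, hy, z, hz, rfl⟩)
    · exact ⟨[.a, .a], by simp [theta2], mem_wordSubstPow_cons.2
        ⟨y, hy, z, mem_wordSubstPow_cons.2 ⟨z, hz, [], mem_wordSubstPow_nil.2 rfl, by simp⟩, rfl⟩⟩
    · exact ⟨[.a, .b], by simp [theta2], mem_wordSubstPow_cons.2
        ⟨y, hy, z, mem_wordSubstPow_cons.2 ⟨z, hz, [], mem_wordSubstPow_nil.2 rfl, by simp⟩, rfl⟩⟩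

lemma substPow_succ_b (m : ℕ) :
    substPow theta2 (m + 1) .b =
      (substPow theta2 m .b).biUnion fun y => (substPow theta2 m .a).image fun z => y ++ z := by
  ext x
  rw [show m + 1 = 1 + m by omega, mem_substPow_add]
  simp only [substPow_one, Finset.mem_biUnion, Finset.mem_image]
  constructor
  · rintro ⟨v, hv, hx⟩
    simp only [theta2, Finset.mem_singleton] at hv
    subst hv
    obtain ⟨y, hy, w, hw, rfl⟩ := mem_wordSubstPow_cons.1 hx
    obtain ⟨z, hz, w', hw', rfl⟩ := mem_wordSubstPow_cons.1 hw
    rw [mem_wordSubstPow_nil.1 hw']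
    exact ⟨y, hy, z, hz, by simp⟩
  · rintro ⟨y, hy, z, hz, rfl⟩
    exact ⟨[.b, .a], by simp [theta2], mem_wordSubstPow_cons.2
      ⟨y, hy, z, mem_wordSubstPow_cons.2 ⟨z, hz, [], mem_wordSubstPow_nil.2 rfl, by simp⟩, rfl⟩⟩

lemma Qm_succ (m : ℕ) : Qm (m + 1) = Qm m * Pm m := by
  rw [Qm, substPow_succ_b, card_append_blocks _ _ (2 ^ m) fun y hy => length_substPow hy]
  rfl

lemma Pm_succ (m : ℕ) : Pm (m + 1) = Pm m * Pm m + Pm m * Qm m := by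
  rw [Pm, substPow_succ_a, Finset.card_union_of_disjoint, card_append_blocks _ _ (2 ^ m)
    (fun y hy => length_substPow hy), card_append_blocks _ _ (2 ^ m)
    (fun y hy => length_substPow hy)]
  · rfl
  · rw [Finset.disjoint_left]
    rintro x hx₁ hx₂
    obtain ⟨y₁, hy₁, hx₁⟩ := Finset.mem_biUnion.1 hx₁
    obtain ⟨y₂, hy₂, hx₂⟩ := Finset.mem_biUnion.1 hx₂
    obtain ⟨z₁, hz₁, rfl⟩ := Finset.mem_image.1 hx₁
    obtain ⟨z₂, hz₂, h⟩ := Finset.mem_image.1 hx₂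
    obtain ⟨-, rfl⟩ := List.append_inj h.symm
      ((length_substPow hy₁).trans (length_substPow hy₂).symm)
    exact Finset.disjoint_left.1 (substPow_disjoint m) hz₁ hz₂

lemma Pm_zero : Pm 0 = 1 := rfl
lemma Qm_zero : Qm 0 = 1 := rfl

lemma Pm_eq (m : ℕ) : Pm m = (m + 1) * Qm m := by
  induction m with
  | zero => rfl
  | succ m ih =>
    rw [Pm_succ, Qm_succ, ih]; ring

lemma Qm_succ' (m : ℕ) : Qm (m + 1) = (m + 1) * (Qm m * Qm m) := by
  rw [Qm_succ, Pm_eq]; ring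

lemma Qm_pos (m : ℕ) : 1 ≤ Qm m := by
  induction m with
  | zero => rfl
  | succ m ih =>
    rw [Qm_succ']
    have : 1 ≤ m + 1 := Nat.le_add_left 1 m
    calc 1 = 1 * (1 * 1) := by ring
    _ ≤ (m + 1) * (Qm m * Qm m) := by
        exact Nat.mul_le_mul this (Nat.mul_le_mul ih ih)

lemma Pm_pos (m : ℕ) : 1 ≤ Pm m := by
  rw [Pm_eq]
  calc 1 = 1 * 1 := rfl
  _ ≤ (m + 1) * Qm m := Nat.mul_le_mul (Nat.le_add_left 1 m) (Qm_pos m)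
/-! ### Padding and legality -/

lemma flatMap_sing {α β : Type*} (l : List α) (f : α → β) :
    l.flatMap (fun a => [f a]) = l.map f := by
  induction l with
  | nil => rfl
  | cons a l ih => simp [List.flatMap_cons, ih]

lemma coe_range (n : ℕ) :
    (do let a ← List.range n; pure ((a : ℕ) : ℤ)) = (List.range n).map (fun a : ℕ => (a : ℤ)) := by
  show (List.range n).flatMap _ = _
  exact flatMap_sing _ _

lemma append_mem_aa {m : ℕ} {w z : List AB} (hw : w ∈ substPow theta2 m .a)
    (hz : z ∈ substPow theta2 m .a) : w ++ z ∈ substPow theta2 (m + 1) .a := by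
  rw [substPow_succ_a]
  exact Finset.mem_union_left _
    (Finset.mem_biUnion.2 ⟨w, hw, Finset.mem_image_of_mem _ hz⟩)

lemma append_mem_ab {m : ℕ} {w z : List AB} (hw : w ∈ substPow theta2 m .a)
    (hz : z ∈ substPow theta2 m .b) : w ++ z ∈ substPow theta2 (m + 1) .a := by
  rw [substPow_succ_a]
  exact Finset.mem_union_right _
    (Finset.mem_biUnion.2 ⟨w, hw, Finset.mem_image_of_mem _ hz⟩)

lemma append_mem_ba {m : ℕ} {w z : List AB} (hw : w ∈ substPow theta2 m .b)
    (hz : z ∈ substPow theta2 m .a) : w ++ z ∈ substPow theta2 (m + 1) .b := by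
  rw [substPow_succ_b]
  exact Finset.mem_biUnion.2 ⟨w, hw, Finset.mem_image_of_mem _ hz⟩

lemma repPow_mem (m : ℕ) : List.replicate (2 ^ m) AB.a ∈ substPow theta2 m .a := by
  induction m with
  | zero => exact mem_substPow_zero.2 rfl
  | succ m ih =>
    have : 2 ^ (m + 1) = 2 ^ m + 2 ^ m := by ring
    rw [this, List.replicate_add]
    exact append_mem_aa ih ih

lemma pad_iter {m : ℕ} {w : List AB} (hw : w ∈ substPow theta2 m .a) (j : ℕ) :
    ∃ L R : ℕ, j ≤ L ∧ j ≤ R ∧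
      List.replicate L AB.a ++ w ++ List.replicate R AB.a ∈ substPow theta2 (m + 2 * j) .a := by
  induction j with
  | zero => exact ⟨0, 0, le_rfl, le_rfl, by simpa using hw⟩
  | succ j ih =>
    obtain ⟨L, R, hL, hR, hmem⟩ := ih
    have h1 := append_mem_aa hmem (repPow_mem (m + 2 * j))
    have h2 := append_mem_aa (repPow_mem (m + 2 * j + 1)) h1
    refine ⟨2 ^ (m + 2 * j + 1) + L, R + 2 ^ (m + 2 * j), ?_, ?_, ?_⟩
    · have := @Nat.one_le_two_pow (m + 2 * j + 1); omega
    · have := @Nat.one_le_two_pow (m + 2 * j); omega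
    · have hidx : m + 2 * (j + 1) = m + 2 * j + 1 + 1 := by ring
      rw [hidx]
      have heq : List.replicate (2 ^ (m + 2 * j + 1) + L) AB.a ++ w ++
          List.replicate (R + 2 ^ (m + 2 * j)) AB.a =
          List.replicate (2 ^ (m + 2 * j + 1)) AB.a ++
            ((List.replicate L AB.a ++ w ++ List.replicate R AB.a) ++
              List.replicate (2 ^ (m + 2 * j)) AB.a) := by
        rw [List.replicate_add, List.replicate_add]
        simp only [List.append_assoc]
      rw [heq]
      exact h2

/-- The point obtained by embedding `w` at the origin in a sea of `a`s. -/
def ptw (w : List AB) : ℤ → AB := fun i => if i < 0 then AB.a else w.getD i.toNat AB.a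

lemma wordAt_length {B : Type*} (x : ℤ → B) (i : ℤ) (n : ℕ) : (wordAt x i n).length = n := by
  unfold wordAt
  rw [coe_range, List.length_map, List.length_map, List.length_range]

lemma wordAt_getElem {B : Type*} (x : ℤ → B) (i : ℤ) (n j : ℕ) (hj : j < n) :
    (wordAt x i n)[j]'(by rw [wordAt_length]; exact hj) = x (i + j) := by
  simp only [wordAt, coe_range, List.map_map]
  simp only [List.getElem_map, List.getElem_range, Function.comp]

lemma padded_getElem (L R : ℕ) (w : List AB) (k : ℕ)
    (hk : k < (List.replicate L AB.a ++ w ++ List.replicate R AB.a).length) :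
    (List.replicate L AB.a ++ w ++ List.replicate R AB.a)[k] =
      if h : L ≤ k ∧ k - L < w.length then w[k - L] else AB.a := by
  simp only [List.length_append, List.length_replicate] at hk
  rcases lt_or_ge k L with hkL | hkL
  · rw [dif_neg (by omega)]
    rw [List.getElem_append_left
      (show k < (List.replicate L AB.a ++ w).length by
        simp only [List.length_append, List.length_replicate]; omega),
      List.getElem_append_left
      (show k < (List.replicate L AB.a).length by simp only [List.length_replicate]; omega)]
    exact List.getElem_replicate _
  · rcases lt_or_ge (k - L) w.length with hkw | hkw
    · rw [dif_pos ⟨hkL, hkw⟩]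
      rw [List.getElem_append_left
        (show k < (List.replicate L AB.a ++ w).length by
          simp only [List.length_append, List.length_replicate]; omega),
        List.getElem_append_right
        (show (List.replicate L AB.a).length ≤ k by simp only [List.length_replicate]; omega)]
      simp only [List.length_replicate]
    · rw [dif_neg (by omega)]
      rw [List.getElem_append_right
        (show (List.replicate L AB.a ++ w).length ≤ k by
          simp only [List.length_append, List.length_replicate]; omega)]
      exact List.getElem_replicate _

lemma ptw_wordAt_eq (w : List AB) (L R : ℕ) (i : ℤ) (n : ℕ)
    (h1 : 0 ≤ (L : ℤ) + i) (h2 : i + n ≤ (w.length : ℤ) + R) :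
    wordAt (ptw w) i n =
      ((List.replicate L AB.a ++ w ++ List.replicate R AB.a).drop ((L : ℤ) + i).toNat).take n := by
  have hWlen : (List.replicate L AB.a ++ w ++ List.replicate R AB.a).length
      = L + w.length + R := by
    simp only [List.length_append, List.length_replicate]
  have hd : ((L : ℤ) + i).toNat + n
      ≤ (List.replicate L AB.a ++ w ++ List.replicate R AB.a).length := by omega
  refine List.ext_getElem ?_ fun j hj₁ hj₂ => ?_
  · rw [wordAt_length, List.length_take, List.length_drop]; omega
  · rw [wordAt_length] at hj₁
    rw [List.getElem_take, List.getElem_drop]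
    rw [wordAt_getElem _ _ _ _ hj₁]
    rw [padded_getElem L R w _ (by omega)]
    have hk : ((L : ℤ) + i).toNat + j = L + (i + j) := by omega
    by_cases hneg : i + (j : ℤ) < 0
    · have : ¬ (L ≤ ((L : ℤ) + i).toNat + j ∧ ((L : ℤ) + i).toNat + j - L < w.length) := by
        omega
      rw [dif_neg this]
      simp [ptw, hneg]
    · push_neg at hneg
      have htn : ((L : ℤ) + i).toNat + j - L = (i + (j : ℤ)).toNat := by omega
      by_cases hlt : (i + (j : ℤ)).toNat < w.length
      · have : L ≤ ((L : ℤ) + i).toNat + j ∧ ((L : ℤ) + i).toNat + j - L < w.length := by omega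
        rw [dif_pos this]
        simp only [ptw, if_neg (not_lt.2 hneg)]
        rw [List.getD_eq_getElem _ _ hlt]
        congr 1
        omega
      · have : ¬ (L ≤ ((L : ℤ) + i).toNat + j ∧ ((L : ℤ) + i).toNat + j - L < w.length) := by
          omega
        rw [dif_neg this]
        simp only [ptw, if_neg (not_lt.2 hneg)]
        rw [List.getD_eq_default _ _ (by omega)]

lemma ptw_mem_substShift {m : ℕ} {w : List AB} (hw : w ∈ substPow theta2 m .a) :
    ptw w ∈ substShift theta2 := by
  intro i n
  obtain ⟨L, R, hL, hR, hmem⟩ := pad_iter hw (n + i.natAbs)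
  refine ⟨.a, m + 2 * (n + i.natAbs), _, hmem, ?_⟩
  rw [ptw_wordAt_eq w L R i n (by omega) (by omega)]
  exact ((List.take_prefix _ _).isInfix).trans (List.drop_suffix _ _).isInfix

lemma ptw_wordAt_recover {w s u t : List AB} (hw : w = s ++ u ++ t) :
    wordAt (ptw w) s.length u.length = u := by
  have := ptw_wordAt_eq w 0 0 s.length u.length (by omega)
    (by rw [hw]; simp only [List.length_append]; push_cast; omega)
  simp only [List.replicate_zero, List.nil_append, List.append_nil, Nat.cast_zero,
    zero_add, Int.toNat_natCast] at this
  rw [this, hw, List.append_assoc, List.drop_left, List.take_left]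

lemma lang_iff_legal {u : List AB} :
    u ∈ lang (substShift theta2) ↔ IsLegal theta2 u := by
  constructor
  · rintro ⟨x, hx, i, hu⟩
    rw [hu]
    exact hx i _
  · rintro ⟨c, k, w, hw, hinf⟩
    have key : ∃ k' w', w' ∈ substPow theta2 k' .a ∧ u <:+: w' := by
      cases c with
      | a => exact ⟨k, w, hw, hinf⟩
      | b =>
        refine ⟨k + 1, List.replicate (2 ^ k) AB.a ++ w,
          append_mem_ab (repPow_mem k) hw, hinf.trans ⟨List.replicate (2 ^ k) AB.a, [], by simp⟩⟩
    obtain ⟨k', w', hw', s, t, hst⟩ := key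
    exact ⟨ptw w', ptw_mem_substShift hw', s.length,
      (ptw_wordAt_recover hst.symm).symm⟩

lemma legalWords_finite (n : ℕ) : {u : List AB | u.length = n ∧ IsLegal theta2 u}.Finite :=
  (List.finite_length_eq AB n).subset fun _ hu => hu.1

lemma complexity_eq (n : ℕ) :
    complexity (substShift theta2) n =
      Nat.card {u : List AB | u.length = n ∧ IsLegal theta2 u} := by
  have hs : {u : List AB | u.length = n ∧ u ∈ lang (substShift theta2)} =
      {u : List AB | u.length = n ∧ IsLegal theta2 u} := by
    ext u; simp [lang_iff_legal]
  unfold complexity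
  rw [hs]
/-! ### Counting: upper bound -/

lemma legal_up_a {u : List AB} (h : IsLegal theta2 u) (N : ℕ) :
    ∃ K, N ≤ K ∧ ∃ w ∈ substPow theta2 K .a, u <:+: w := by
  obtain ⟨c, k, w, hw, hinf⟩ := h
  have base : ∃ k₀, ∃ w₀ ∈ substPow theta2 k₀ .a, u <:+: w₀ := by
    cases c with
    | a => exact ⟨k, w, hw, hinf⟩
    | b =>
      exact ⟨k + 1, List.replicate (2 ^ k) AB.a ++ w, append_mem_ab (repPow_mem k) hw,
        hinf.trans ⟨List.replicate (2 ^ k) AB.a, [], by simp⟩⟩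
  obtain ⟨k₀, w₀, hw₀, hinf₀⟩ := base
  refine ⟨max N k₀, le_max_left _ _, ?_⟩
  obtain ⟨d, hd⟩ : ∃ d, max N k₀ = k₀ + d := ⟨max N k₀ - k₀, by omega⟩
  rw [hd]
  clear hd
  induction d with
  | zero => exact ⟨w₀, hw₀, hinf₀⟩
  | succ d ih =>
    obtain ⟨w₁, hw₁, hinf₁⟩ := ih
    exact ⟨w₁ ++ List.replicate (2 ^ (k₀ + d)) AB.a, append_mem_aa hw₁ (repPow_mem _),
      hinf₁.trans ⟨[], List.replicate (2 ^ (k₀ + d)) AB.a, by simp⟩⟩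

lemma flatten_length_const {ℓ : ℕ} : ∀ {B : List (List AB)},
    (∀ bl ∈ B, bl.length = ℓ) → B.flatten.length = B.length * ℓ := by
  intro B
  induction B with
  | nil => intro _; simp
  | cons b B ih =>
    intro h
    have hb := h b (by simp)
    have := ih fun bl hbl => h bl (by simp [hbl])
    simp only [List.flatten_cons, List.length_append, List.length_cons, this, hb]
    ring

lemma drop_mul_flatten {ℓ : ℕ} (q : ℕ) : ∀ {B : List (List AB)},
    (∀ bl ∈ B, bl.length = ℓ) → B.flatten.drop (q * ℓ) = (B.drop q).flatten := by
  induction q with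
  | zero => intro B _; simp
  | succ q ih =>
    intro B hB
    cases B with
    | nil => simp
    | cons b B =>
      have hb : b.length = ℓ := hB b (by simp)
      have h2 : List.drop ℓ (b ++ B.flatten) = B.flatten := by
        rw [← hb]; exact List.drop_left
      rw [List.flatten_cons]
      calc (b ++ B.flatten).drop ((q + 1) * ℓ)
          = ((b ++ B.flatten).drop ℓ).drop (q * ℓ) := by
            rw [List.drop_drop]; congr 1; ring
        _ = B.flatten.drop (q * ℓ) := by rw [h2]
        _ = (B.drop q).flatten := ih fun bl hbl => hB bl (by simp [hbl])
        _ = ((b :: B).drop (q + 1)).flatten := rfl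

lemma flatten_inj {ℓ : ℕ} (hl : 1 ≤ ℓ) : ∀ {B C : List (List AB)},
    (∀ bl ∈ B, bl.length = ℓ) → (∀ bl ∈ C, bl.length = ℓ) →
    B.flatten = C.flatten → B = C := by
  intro B
  induction B with
  | nil =>
    intro C _ hC h
    cases C with
    | nil => rfl
    | cons c C =>
      exfalso
      have := congrArg List.length h
      simp only [List.flatten_nil, List.length_nil, List.flatten_cons, List.length_append,
        hC c (by simp)] at this
      omega
  | cons b B ih =>
    intro C hB hC h
    cases C with
    | nil =>
      exfalso
      have := congrArg List.length h
      simp only [List.flatten_nil, List.length_nil, List.flatten_cons, List.length_append,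
        hB b (by simp)] at this
      omega
    | cons c C =>
      simp only [List.flatten_cons] at h
      obtain ⟨rfl, h2⟩ := List.append_inj h ((hB b (by simp)).trans (hC c (by simp)).symm)
      rw [ih (fun bl hbl => hB bl (by simp [hbl])) (fun bl hbl => hC bl (by simp [hbl])) h2]

lemma forall₂_mem_right {α β : Type*} {R : α → β → Prop} {l₁ : List α} {l₂ : List β}
    (h : List.Forall₂ R l₁ l₂) : ∀ b ∈ l₂, ∃ a ∈ l₁, R a b := by
  induction h with
  | nil => intro b hb; cases hb
  | cons hr _ ih =>
    intro b hb
    rcases List.mem_cons.1 hb with rfl | hb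
    · exact ⟨_, by simp, hr⟩
    · obtain ⟨a, ha, hab⟩ := ih b hb
      exact ⟨a, by simp [ha], hab⟩

lemma key_extract {m n : ℕ} {B : List (List AB)} (hB : ∀ bl ∈ B, bl.length = 2 ^ m)
    {u : List AB} (hu : u <:+: B.flatten) (hn : u.length = n) :
    ∃ t < 2 ^ m, ∃ g : Fin (n / 2 ^ m + 2) → List AB,
      (∀ i, g i ∈ B ∨ g i = List.replicate (2 ^ m) AB.a) ∧
      u = ((List.ofFn g).flatten.drop t).take n := by
  have hℓpos : 0 < 2 ^ m := Nat.pow_pos (by norm_num)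
  obtain ⟨s, t', hst⟩ := hu
  set ℓ := 2 ^ m with hℓ
  set d := s.length with hdd
  have hud : u = (B.flatten.drop d).take n := by
    rw [← hst, List.append_assoc, hdd, List.drop_left, ← hn, List.take_left]
  have hdn : d + n ≤ B.flatten.length := by
    rw [← hst]
    simp only [List.length_append, hn]
    omega
  set q := d / ℓ with hq
  set tt := d % ℓ with htt
  have hdqt : q * ℓ + tt = d := by rw [hq, htt, Nat.mul_comm]; exact Nat.div_add_mod d ℓ
  set C := B.drop q with hC
  have hCb : ∀ bl ∈ C, bl.length = ℓ := fun bl hbl => hB bl (List.mem_of_mem_drop hbl)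
  have hdropq : B.flatten.drop (q * ℓ) = C.flatten := drop_mul_flatten q hB
  have hud2 : u = (C.flatten.drop tt).take n := by
    rw [hud, ← hdropq, List.drop_drop]
    congr 2
    omega
  have hBlen : B.flatten.length = B.length * ℓ := flatten_length_const hB
  have hClen : C.flatten.length = (B.length - q) * ℓ := by
    rw [flatten_length_const hCb, hC, List.length_drop]
  have htn : tt + n ≤ C.flatten.length := by
    rw [hClen, Nat.sub_mul]
    omega
  set r := n / ℓ + 2 with hr
  have hrl : tt + n < r * ℓ := by
    have h1 : ℓ * (n / ℓ) + n % ℓ = n := Nat.div_add_mod n ℓ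
    have h2 : n % ℓ < ℓ := Nat.mod_lt _ hℓpos
    have h3 : tt < ℓ := Nat.mod_lt _ hℓpos
    have h4 : r * ℓ = (n / ℓ) * ℓ + 2 * ℓ := by rw [hr, Nat.add_mul]
    have h5 : (n / ℓ) * ℓ = ℓ * (n / ℓ) := Nat.mul_comm _ _
    omega
  refine ⟨tt, Nat.mod_lt _ hℓpos, fun i => C.getD i (List.replicate ℓ AB.a), ?_, ?_⟩
  · intro i
    dsimp only
    rcases lt_or_ge (i : ℕ) C.length with hi | hi
    · left
      rw [List.getD_eq_getElem _ _ hi]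
      exact List.mem_of_mem_drop (List.getElem_mem _)
    · right
      exact List.getD_eq_default _ _ hi
  · rcases le_or_gt r C.length with hrC | hrC
    · have hofFn : List.ofFn (fun i : Fin r => C.getD i (List.replicate ℓ AB.a)) = C.take r := by
        refine List.ext_getElem ?_ fun j h1 h2 => ?_
        · simp only [List.length_ofFn, List.length_take]
          omega
        · simp only [List.getElem_ofFn]
          rw [List.getD_eq_getElem _ _ (by rw [List.length_take] at h2; omega),
            List.getElem_take]
      have hPlen : (C.take r).flatten.length = r * ℓ := by
        rw [flatten_length_const fun bl hbl => hCb bl (List.mem_of_mem_take hbl),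
          List.length_take]
        congr 1
        omega
      have heq : ((C.take r).flatten.drop tt).take n = (C.flatten.drop tt).take n := by
        conv_rhs => rw [← List.take_append_drop r C, List.flatten_append]
        rw [List.drop_append_of_le_length (by omega),
          List.take_append_of_le_length (by rw [List.length_drop]; omega)]
      rw [hofFn, heq]
      exact hud2
    · have hofFn : List.ofFn (fun i : Fin r => C.getD i (List.replicate ℓ AB.a)) =
          C ++ List.replicate (r - C.length) (List.replicate ℓ AB.a) := by
        refine List.ext_getElem ?_ fun j h1 h2 => ?_
        · simp only [List.length_ofFn, List.length_append, List.length_replicate]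
          omega
        · simp only [List.getElem_ofFn]
          rcases lt_or_ge j C.length with hj | hj
          · rw [List.getD_eq_getElem _ _ hj, List.getElem_append_left hj]
          · rw [List.getD_eq_default _ _ hj, List.getElem_append_right hj,
              List.getElem_replicate]
      have heq : ((C ++ List.replicate (r - C.length) (List.replicate ℓ AB.a)).flatten.drop
          tt).take n = (C.flatten.drop tt).take n := by
        rw [List.flatten_append,
          List.drop_append_of_le_length (by omega),
          List.take_append_of_le_length (by rw [List.length_drop]; omega)]
      rw [hofFn, heq]
      exact hud2

noncomputable def Fm (m : ℕ) : Finset (List AB) :=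
  substPow theta2 m .a ∪ substPow theta2 m .b

lemma card_Fm (m : ℕ) : (Fm m).card = Pm m + Qm m :=
  Finset.card_union_of_disjoint (substPow_disjoint m)

lemma card_upper (m n : ℕ) :
    Nat.card {u : List AB | u.length = n ∧ IsLegal theta2 u} ≤
      2 ^ m * (Pm m + Qm m) ^ (n / 2 ^ m + 2) := by
  classical
  set r := n / 2 ^ m + 2 with hr
  set T : Finset (List AB) :=
    (Finset.range (2 ^ m) ×ˢ Fintype.piFinset fun _ : Fin r => Fm m).image
      (fun p => ((List.ofFn p.2).flatten.drop p.1).take n) with hT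
  have hsub : {u : List AB | u.length = n ∧ IsLegal theta2 u} ⊆ ↑T := by
    rintro u ⟨hlen, hleg⟩
    obtain ⟨K, hK, w, hw, hinf⟩ := legal_up_a hleg m
    have hw' : w ∈ substPow theta2 ((K - m) + m) .a := by rwa [Nat.sub_add_cancel hK]
    obtain ⟨v, hv, hwv⟩ := mem_substPow_add.1 hw'
    obtain ⟨Bl, hBl, rfl⟩ := mem_wordSubst_iff_flatten.1 hwv
    have hBmem : ∀ bl ∈ Bl, bl ∈ Fm m := by
      intro bl hbl
      obtain ⟨c, -, hc⟩ := forall₂_mem_right hBl bl hbl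
      cases c with
      | a => exact Finset.mem_union_left _ hc
      | b => exact Finset.mem_union_right _ hc
    have hBlen : ∀ bl ∈ Bl, bl.length = 2 ^ m := by
      intro bl hbl
      obtain ⟨c, -, hc⟩ := forall₂_mem_right hBl bl hbl
      exact length_substPow hc
    obtain ⟨tt, httlt, g, hg, hueq⟩ := key_extract hBlen hinf hlen
    refine Finset.mem_coe.2 (Finset.mem_image.2 ⟨(tt, g), ?_, hueq.symm⟩)
    rw [Finset.mem_product]
    refine ⟨Finset.mem_range.2 httlt, Fintype.mem_piFinset.2 fun i => ?_⟩
    show g i ∈ Fm m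
    rcases hg i with h | h
    · exact hBmem _ h
    · rw [h]
      exact Finset.mem_union_left _ (repPow_mem m)
  rw [Nat.card_coe_set_eq]
  calc ({u : List AB | u.length = n ∧ IsLegal theta2 u}).ncard
      ≤ (↑T : Set (List AB)).ncard := Set.ncard_le_ncard hsub T.finite_toSet
    _ = T.card := Set.ncard_coe_finset T
    _ ≤ ((Finset.range (2 ^ m)) ×ˢ (Fintype.piFinset fun _ : Fin r => Fm m)).card :=
        Finset.card_image_le
    _ = 2 ^ m * (Pm m + Qm m) ^ r := by
        rw [Finset.card_product, Finset.card_range, Fintype.card_piFinset]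
        simp [card_Fm, Finset.prod_const]
/-! ### Counting: lower bound, monotonicity -/

lemma legal_wordSubstPow {m : ℕ} {u x : List AB} (hu : IsLegal theta2 u)
    (hx : x ∈ wordSubstPow theta2 m u) : IsLegal theta2 x := by
  obtain ⟨c, k, w, hw, s, t, hst⟩ := hu
  obtain ⟨ys, hys⟩ := wordSubstPow_nonempty theta2_nonempty m s
  obtain ⟨yt, hyt⟩ := wordSubstPow_nonempty theta2_nonempty m t
  have hmem : ys ++ x ++ yt ∈ wordSubstPow theta2 m w := by
    rw [← hst]
    exact mem_wordSubstPow_append.2 ⟨ys ++ x,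
      mem_wordSubstPow_append.2 ⟨ys, hys, x, hx, rfl⟩, yt, hyt, rfl⟩
  exact ⟨c, k + m, ys ++ x ++ yt, mem_substPow_add.2 ⟨w, hw, hmem⟩, ⟨ys, yt, rfl⟩⟩

lemma rep_legal (n : ℕ) : IsLegal theta2 (List.replicate n AB.a) := by
  obtain ⟨m, hm⟩ : ∃ m, n ≤ 2 ^ m := ⟨n, Nat.le_of_lt Nat.lt_two_pow_self⟩
  refine ⟨.a, m, _, repPow_mem m, ⟨[], List.replicate (2 ^ m - n) AB.a, ?_⟩⟩
  rw [List.nil_append, ← List.replicate_add]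
  congr 1
  omega

lemma ab_pow_mem (r : ℕ) :
    (List.replicate r ([AB.a, AB.b])).flatten ∈ wordSubst theta2 (List.replicate r AB.a) := by
  induction r with
  | zero => exact mem_wordSubst_nil.2 rfl
  | succ r ih =>
    rw [List.replicate_succ, List.replicate_succ, List.flatten_cons]
    exact mem_wordSubst_cons.2 ⟨[AB.a, AB.b], by simp [theta2], _, ih, rfl⟩

lemma abr_legal (r : ℕ) : IsLegal theta2 (List.replicate r ([AB.a, AB.b])).flatten := by
  have h1 : (List.replicate r ([AB.a, AB.b])).flatten ∈
      wordSubstPow theta2 1 (List.replicate r AB.a) := by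
    rw [wordSubstPow_one]
    exact ab_pow_mem r
  exact legal_wordSubstPow (rep_legal r) h1

lemma card_lower (m r : ℕ) :
    (Pm m * Qm m) ^ r ≤
      Nat.card {u : List AB | u.length = r * 2 ^ (m + 1) ∧ IsLegal theta2 u} := by
  classical
  set T' : Finset (List AB) :=
    (Fintype.piFinset fun _ : Fin r => (substPow theta2 m .a) ×ˢ (substPow theta2 m .b)).image
      (fun g => (List.ofFn fun i => (g i).1 ++ (g i).2).flatten) with hT'
  have hblocklen : ∀ (g : Fin r → List AB × List AB),
      (∀ i, (g i).1 ∈ substPow theta2 m .a ∧ (g i).2 ∈ substPow theta2 m .b) →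
      ∀ bl ∈ List.ofFn (fun i => (g i).1 ++ (g i).2), bl.length = 2 ^ (m + 1) := by
    intro g hgm bl hbl
    obtain ⟨i, rfl⟩ := List.mem_ofFn.1 hbl
    rw [List.length_append, length_substPow (hgm i).1, length_substPow (hgm i).2]
    ring
  have hcard : T'.card = (Pm m * Qm m) ^ r := by
    rw [hT', Finset.card_image_of_injOn, Fintype.card_piFinset]
    · simp [Finset.card_product, Pm, Qm, Finset.prod_const]
    · intro g hg g' hg' h
      have hgm : ∀ i, (g i).1 ∈ substPow theta2 m .a ∧ (g i).2 ∈ substPow theta2 m .b :=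
        fun i => Finset.mem_product.1 (Fintype.mem_piFinset.1 hg i)
      have hgm' : ∀ i, (g' i).1 ∈ substPow theta2 m .a ∧ (g' i).2 ∈ substPow theta2 m .b :=
        fun i => Finset.mem_product.1 (Fintype.mem_piFinset.1 hg' i)
      have hofn := flatten_inj (Nat.one_le_two_pow) (hblocklen g hgm) (hblocklen g' hgm') h
      funext i
      have hi : (g i).1 ++ (g i).2 = (g' i).1 ++ (g' i).2 :=
        congrFun (List.ofFn_inj.1 hofn) i
      obtain ⟨h1, h2⟩ := List.append_inj hi
        ((length_substPow (hgm i).1).trans (length_substPow (hgm' i).1).symm)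
      exact Prod.ext h1 h2
  have hsub : (↑T' : Set (List AB)) ⊆
      {u : List AB | u.length = r * 2 ^ (m + 1) ∧ IsLegal theta2 u} := by
    rintro x hx
    obtain ⟨g, hg, rfl⟩ := Finset.mem_image.1 hx
    have hgm : ∀ i, (g i).1 ∈ substPow theta2 m .a ∧ (g i).2 ∈ substPow theta2 m .b :=
      fun i => Finset.mem_product.1 (Fintype.mem_piFinset.1 hg i)
    constructor
    · rw [flatten_length_const (hblocklen g hgm), List.length_ofFn]
    · have hmem : (List.ofFn fun i => (g i).1 ++ (g i).2).flatten ∈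
          wordSubstPow theta2 m ((List.replicate r ([AB.a, AB.b])).flatten) := by
        apply wordSubst_flatten
        rw [List.forall₂_iff_get]
        refine ⟨by simp, fun i h1 h2 => ?_⟩
        have h2' : i < r := by simpa using h2
        simp only [List.get_eq_getElem, List.getElem_replicate, List.getElem_ofFn]
        exact mem_wordSubstPow_cons.2 ⟨(g ⟨i, h2'⟩).1, (hgm ⟨i, h2'⟩).1,
          _, mem_wordSubstPow_cons.2 ⟨(g ⟨i, h2'⟩).2, (hgm ⟨i, h2'⟩).2, [],
            mem_wordSubstPow_nil.2 rfl, by simp⟩, rfl⟩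
      exact legal_wordSubstPow (abr_legal r) hmem
  rw [Nat.card_coe_set_eq, ← hcard, ← Set.ncard_coe_finset T']
  exact Set.ncard_le_ncard hsub (legalWords_finite _)

lemma legal_extend {u : List AB} (h : IsLegal theta2 u) :
    ∃ c, IsLegal theta2 (u ++ [c]) := by
  obtain ⟨K, hK, w, hw, s, t, hst⟩ := legal_up_a h 0
  cases t with
  | cons c t =>
    refine ⟨c, .a, K, w, hw, ⟨s, t, ?_⟩⟩
    rw [← hst]
    simp [List.append_assoc]
  | nil =>
    refine ⟨AB.a, .a, K + 1, w ++ List.replicate (2 ^ K) AB.a,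
      append_mem_aa hw (repPow_mem K), ⟨s, List.replicate (2 ^ K - 1) AB.a, ?_⟩⟩
    rw [← hst]
    have h2 : (2:ℕ) ^ K = 1 + (2 ^ K - 1) := by
      have := Nat.one_le_two_pow (n := K); omega
    rw [h2, List.replicate_add]
    simp [List.append_assoc, List.replicate_one]

lemma card_succ_le (n : ℕ) :
    Nat.card {u : List AB | u.length = n ∧ IsLegal theta2 u} ≤
      Nat.card {u : List AB | u.length = n + 1 ∧ IsLegal theta2 u} := by
  haveI : Finite {u : List AB | u.length = n + 1 ∧ IsLegal theta2 u} :=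
    (legalWords_finite (n + 1)).to_subtype
  have hf : ∀ u : {u : List AB | u.length = n ∧ IsLegal theta2 u},
      ((u : List AB) ++ [Classical.choose (legal_extend u.2.2)]) ∈
        {u : List AB | u.length = n + 1 ∧ IsLegal theta2 u} := by
    intro u
    exact ⟨by simp [u.2.1], Classical.choose_spec (legal_extend u.2.2)⟩
  apply Nat.card_le_card_of_injective
    (fun u : {u : List AB | u.length = n ∧ IsLegal theta2 u} =>
      (⟨(u : List AB) ++ [Classical.choose (legal_extend u.2.2)], hf u⟩ :
      {u : List AB | u.length = n + 1 ∧ IsLegal theta2 u}))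
  intro u₁ u₂ h
  rcases u₁ with ⟨v₁, hv₁⟩
  rcases u₂ with ⟨v₂, hv₂⟩
  have hval := congrArg Subtype.val h
  simp only at hval
  apply Subtype.ext
  show v₁ = v₂
  have tl : ∀ (v : List AB) (c : AB), v.length = n → List.take n (v ++ [c]) = v := by
    intro v c hc
    rw [← hc]
    exact List.take_left
  have h' := congrArg (List.take n) hval
  rwa [tl _ _ hv₁.1, tl _ _ hv₂.1] at h'

lemma card_mono : Monotone fun n =>
    Nat.card {u : List AB | u.length = n ∧ IsLegal theta2 u} :=
  monotone_nat_of_le_succ card_succ_le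

lemma card_pos (n : ℕ) :
    1 ≤ Nat.card {u : List AB | u.length = n ∧ IsLegal theta2 u} := by
  haveI : Finite {u : List AB | u.length = n ∧ IsLegal theta2 u} :=
    (legalWords_finite n).to_subtype
  haveI : Nonempty {u : List AB | u.length = n ∧ IsLegal theta2 u} :=
    ⟨⟨List.replicate n AB.a, by simp [rep_legal n]⟩⟩
  exact Nat.card_pos
/-! ### Analysis -/

noncomputable def CC (n : ℕ) : ℕ := Nat.card {u : List AB | u.length = n ∧ IsLegal theta2 u}

noncomputable def sm (m : ℕ) : ℝ := ∑ n ∈ Finset.range m, Real.log ((n:ℝ) + 1) / 2 ^ (n + 1)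

lemma log_Qm (m : ℕ) : Real.log (Qm m) = 2 ^ m * sm m := by
  induction m with
  | zero => simp [Qm_zero, sm]
  | succ m ih =>
    have hq : ((Qm (m+1) : ℕ) : ℝ) = ((m:ℝ) + 1) * ((Qm m : ℝ) * (Qm m : ℝ)) := by
      rw [Qm_succ']; push_cast; ring
    have hQpos : (0:ℝ) < (Qm m : ℝ) := by exact_mod_cast Qm_pos m
    rw [hq, Real.log_mul (by positivity) (by positivity),
      Real.log_mul (by positivity) (by positivity), ih]
    simp only [sm, Finset.sum_range_succ]
    push_cast
    field_simp
    ring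

lemma summable_g : Summable (fun n : ℕ => Real.log ((n:ℝ) + 1) / 2 ^ (n + 1)) := by
  have hsum : Summable (fun n : ℕ => (n:ℝ) * (1/2:ℝ) ^ n) := by
    simpa using summable_pow_mul_geometric_of_norm_lt_one 1
      (show ‖(1/2:ℝ)‖ < 1 by
        rw [Real.norm_eq_abs, abs_of_pos (by norm_num : (0:ℝ) < 1/2)]; norm_num)
  refine Summable.of_nonneg_of_le (fun n => div_nonneg (Real.log_nonneg (by
    have := Nat.cast_nonneg (α := ℝ) n; linarith)) (by positivity)) (fun n => ?_) hsum
  have hb : Real.log ((n:ℝ) + 1) ≤ n := by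
    have := Real.log_le_sub_one_of_pos (x := (n:ℝ) + 1) (by positivity)
    simpa using this
  have h2 : Real.log ((n:ℝ)+1) / 2 ^ (n+1) ≤ (n:ℝ) / 2 ^ n := by
    apply div_le_div₀ (Nat.cast_nonneg n) hb (by positivity)
    exact pow_le_pow_right₀ (by norm_num) (by omega)
  calc Real.log ((n:ℝ)+1) / 2 ^ (n+1) ≤ (n:ℝ) / 2 ^ n := h2
    _ = (n:ℝ) * (1/2)^n := by
        rw [div_eq_mul_inv, one_div, inv_pow]

noncomputable def Sval : ℝ := ∑' n : ℕ, Real.log ((n:ℝ) + 1) / 2 ^ (n + 1)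

lemma sm_tendsto : Tendsto sm atTop (𝓝 Sval) := summable_g.hasSum.tendsto_sum_nat

lemma f_nonneg (n : ℕ) : 0 ≤ Real.log (CC n) / n :=
  div_nonneg (Real.log_nonneg (by exact_mod_cast card_pos n)) (Nat.cast_nonneg n)

lemma f_bddAbove : IsBoundedUnder (· ≤ ·) atTop (fun n : ℕ => Real.log (CC n) / n) := by
  refine ⟨3 * Real.log 2, eventually_map.2 ?_⟩
  filter_upwards [eventually_ge_atTop 2] with n hn
  have h1 : CC n ≤ 2 ^ (n + 2) := by
    have h := card_upper 0 n
    simpa [CC, Pm_zero, Qm_zero] using h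
  have hCCpos : (0:ℝ) < CC n := by exact_mod_cast card_pos n
  have h2 : Real.log (CC n) ≤ ((n:ℝ) + 2) * Real.log 2 := by
    calc Real.log (CC n) ≤ Real.log ((2:ℝ) ^ (n + 2)) :=
          Real.log_le_log hCCpos (by exact_mod_cast h1)
      _ = ((n + 2 : ℕ):ℝ) * Real.log 2 := by rw [Real.log_pow]
      _ = ((n:ℝ) + 2) * Real.log 2 := by push_cast; ring
  have hn2 : (2:ℝ) ≤ n := by exact_mod_cast hn
  have hnpos : (0:ℝ) < n := by linarith
  rw [div_le_iff₀ hnpos]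
  have hlog2 : 0 ≤ Real.log 2 := Real.log_nonneg (by norm_num)
  nlinarith [h2]

lemma E_le_beta (m : ℕ) :
    Filter.limsup (fun n : ℕ => Real.log (CC n) / n) atTop ≤
      Real.log ((m:ℝ) + 2) / 2 ^ m + sm m := by
  have hQ : (1:ℝ) ≤ (Qm m : ℝ) := by exact_mod_cast Qm_pos m
  set D : ℝ := ((m:ℝ) + 2) * (Qm m : ℝ) with hD
  have hD1 : (1:ℝ) ≤ D := by rw [hD]; nlinarith
  have hlogD : 0 ≤ Real.log D := Real.log_nonneg hD1
  have hPQ : ((Pm m + Qm m : ℕ) : ℝ) = D := by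
    rw [Pm_eq, hD]; push_cast; ring
  set c : ℝ := (m:ℝ) * Real.log 2 + 2 * Real.log D with hc
  have hev : ∀ᶠ n in atTop, Real.log (CC n) / n ≤ c / n + Real.log D / 2 ^ m := by
    filter_upwards [eventually_ge_atTop 1] with n hn
    have hnpos : (0:ℝ) < n := by exact_mod_cast hn
    have h1 : (CC n : ℝ) ≤ 2 ^ m * D ^ (n / 2 ^ m + 2) := by
      calc (CC n : ℝ) ≤ ((2 ^ m * (Pm m + Qm m) ^ (n / 2 ^ m + 2) : ℕ) : ℝ) := by
            exact_mod_cast card_upper m n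
        _ = 2 ^ m * D ^ (n / 2 ^ m + 2) := by
            rw [Nat.cast_mul, Nat.cast_pow, Nat.cast_pow, hPQ, Nat.cast_ofNat]
    have hCCpos : (0:ℝ) < CC n := by exact_mod_cast card_pos n
    have h2 : Real.log (CC n) ≤
        (m:ℝ) * Real.log 2 + ((n / 2^m : ℕ):ℝ) * Real.log D + 2 * Real.log D := by
      calc Real.log (CC n) ≤ Real.log (2 ^ m * D ^ (n / 2 ^ m + 2)) :=
            Real.log_le_log hCCpos h1
        _ = (m:ℝ) * Real.log 2 + ((n / 2^m + 2 : ℕ):ℝ) * Real.log D := by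
            rw [Real.log_mul (by positivity) (by positivity), Real.log_pow, Real.log_pow]
        _ = (m:ℝ) * Real.log 2 + ((n / 2^m : ℕ):ℝ) * Real.log D + 2 * Real.log D := by
            push_cast; ring
    have h3 : ((n / 2 ^ m : ℕ):ℝ) ≤ (n:ℝ) / 2 ^ m := by
      calc ((n / 2 ^ m : ℕ):ℝ) ≤ (n:ℝ) / ((2^m : ℕ):ℝ) := Nat.cast_div_le
        _ = (n:ℝ) / 2 ^ m := by push_cast; try ring
    have h4 : Real.log (CC n) / n ≤
        ((m:ℝ) * Real.log 2 + ((n / 2^m : ℕ):ℝ) * Real.log D + 2 * Real.log D) / n :=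
      (div_le_div_iff_of_pos_right hnpos).2 h2
    refine h4.trans ?_
    have h5 : (((n / 2^m : ℕ):ℝ) * Real.log D) / n ≤ Real.log D / 2^m := by
      have h6 : ((n / 2^m : ℕ):ℝ) * Real.log D ≤ ((n:ℝ)/2^m) * Real.log D :=
        mul_le_mul_of_nonneg_right h3 hlogD
      calc (((n / 2^m : ℕ):ℝ) * Real.log D)/n ≤ (((n:ℝ)/2^m) * Real.log D)/n :=
            (div_le_div_iff_of_pos_right hnpos).2 h6
        _ = Real.log D / 2^m := by
            field_simp
            try ring
    calc ((m:ℝ) * Real.log 2 + ((n / 2^m : ℕ):ℝ) * Real.log D + 2 * Real.log D)/n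
        = c/n + (((n / 2^m : ℕ):ℝ) * Real.log D)/n := by rw [hc]; ring
      _ ≤ c/n + Real.log D / 2^m := by linarith
  have htend : Tendsto (fun n : ℕ => c / n + Real.log D / 2 ^ m) atTop
      (𝓝 (0 + Real.log D / 2 ^ m)) :=
    (tendsto_const_div_atTop_nhds_zero_nat c).add tendsto_const_nhds
  have hcob : Filter.IsCoboundedUnder (· ≤ ·) atTop (fun n : ℕ => Real.log (CC n) / n) :=
    Filter.IsBoundedUnder.isCoboundedUnder_le
      ⟨0, eventually_map.2 (Eventually.of_forall f_nonneg)⟩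
  have hls := Filter.limsup_le_limsup hev hcob htend.isBoundedUnder_le
  rw [Filter.Tendsto.limsup_eq htend] at hls
  have hsplit : Real.log D = Real.log ((m:ℝ)+2) + Real.log (Qm m) := by
    rw [hD]
    exact Real.log_mul (by positivity) (by positivity)
  have hQs : Real.log (Qm m) / 2^m = sm m := by
    rw [log_Qm]
    field_simp
  calc Filter.limsup (fun n : ℕ => Real.log (CC n) / n) atTop
      ≤ 0 + Real.log D / 2^m := hls
    _ = Real.log ((m:ℝ)+2)/2^m + sm m := by rw [hsplit, zero_add, add_div, hQs]

lemma beta_tendsto :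
    Tendsto (fun m : ℕ => Real.log ((m:ℝ)+2)/2^m + sm m) atTop (𝓝 (0 + Sval)) := by
  refine Tendsto.add ?_ sm_tendsto
  have hfg : ∀ m : ℕ, Real.log ((m:ℝ)+2)/2^m ≤ ((m:ℝ)+1) * (1/2)^m := by
    intro m
    have hlog : Real.log ((m:ℝ)+2) ≤ (m:ℝ)+1 := by
      have := Real.log_le_sub_one_of_pos (x := (m:ℝ)+2) (by positivity)
      linarith
    have h1 : Real.log ((m:ℝ)+2)/2^m ≤ ((m:ℝ)+1)/2^m :=
      (div_le_div_iff_of_pos_right (by positivity)).2 hlog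
    calc Real.log ((m:ℝ)+2)/2^m ≤ ((m:ℝ)+1)/2^m := h1
      _ = ((m:ℝ)+1) * (1/2)^m := by rw [div_eq_mul_inv, one_div, inv_pow]
  have hf0 : ∀ m : ℕ, 0 ≤ Real.log ((m:ℝ)+2)/2^m := fun m =>
    div_nonneg (Real.log_nonneg (by
      have := Nat.cast_nonneg (α := ℝ) m; linarith)) (by positivity)
  have h1 : Summable (fun m : ℕ => (m:ℝ) * (1/2:ℝ)^m) := by
    simpa using summable_pow_mul_geometric_of_norm_lt_one 1
      (show ‖(1/2:ℝ)‖ < 1 by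
        rw [Real.norm_eq_abs, abs_of_pos (by norm_num : (0:ℝ) < 1/2)]; norm_num)
  have h2 : Summable (fun m : ℕ => (1/2:ℝ)^m) :=
    summable_geometric_of_lt_one (by norm_num) (by norm_num)
  have hs : Summable (fun m : ℕ => ((m:ℝ)+1) * (1/2:ℝ)^m) := by
    have h3 := h1.add h2
    apply h3.congr
    intro m
    ring
  exact squeeze_zero hf0 hfg hs.tendsto_atTop_zero

lemma tendsto_cast_div (k : ℕ) (hk : 0 < k) :
    Tendsto (fun n : ℕ => ((n / k : ℕ) : ℝ) / n) atTop (𝓝 (1 / k)) := by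
  have hk' : (0:ℝ) < k := by exact_mod_cast hk
  apply tendsto_of_tendsto_of_tendsto_of_le_of_le'
    (g := fun n : ℕ => 1 / (k:ℝ) - 1 / n) (h := fun n : ℕ => 1 / (k:ℝ))
  · have := (tendsto_const_nhds (x := 1/(k:ℝ)) (f := atTop (α := ℕ))).sub
      tendsto_one_div_atTop_nhds_zero_nat
    simpa using this
  · exact tendsto_const_nhds
  · filter_upwards [eventually_ge_atTop 1] with n hn
    have hnR : (0:ℝ) < n := by exact_mod_cast hn
    have h2 : n < k * (n / k) + k := by
      have ha := Nat.div_add_mod n k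
      have hb := Nat.mod_lt n hk
      omega
    have h1 : (n:ℝ) < (k:ℝ) * ((n / k : ℕ):ℝ) + k := by exact_mod_cast h2
    have h3 : (n:ℝ)/k - 1 ≤ ((n / k : ℕ):ℝ) := by
      rw [sub_le_iff_le_add, div_le_iff₀ hk']
      nlinarith
    have heq : 1/(k:ℝ) - 1/n = ((n:ℝ)/k - 1)/n := by
      field_simp
    rw [heq]
    exact (div_le_div_iff_of_pos_right hnR).2 h3
  · filter_upwards [eventually_ge_atTop 1] with n hn
    have hnR : (0:ℝ) < n := by exact_mod_cast hn
    have h4 : ((n / k : ℕ):ℝ) ≤ (n:ℝ)/k := Nat.cast_div_le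
    calc ((n / k : ℕ):ℝ)/(n:ℝ) ≤ ((n:ℝ)/k)/n := (div_le_div_iff_of_pos_right hnR).2 h4
      _ = 1/k := by
          field_simp

lemma sm_le_E (m : ℕ) :
    sm (m+1) ≤ Filter.limsup (fun n : ℕ => Real.log (CC n) / n) atTop := by
  set k := 2 ^ (m + 1) with hk
  have hkpos : 0 < k := by rw [hk]; positivity
  have hQ' : (1:ℝ) ≤ (Qm (m+1) : ℝ) := by exact_mod_cast Qm_pos (m+1)
  have hlogQ : 0 ≤ Real.log (Qm (m+1)) := Real.log_nonneg hQ'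
  have hev : ∀ᶠ n in atTop,
      (((n / k : ℕ):ℝ) / n) * Real.log (Qm (m+1)) ≤ Real.log (CC n) / n := by
    filter_upwards [eventually_ge_atTop 1] with n hn
    have hnpos : (0:ℝ) < n := by exact_mod_cast hn
    have h1 : Qm (m+1) ^ (n / k) ≤ CC n := by
      have hlow := card_lower m (n / k)
      rw [show Pm m * Qm m = Qm (m+1) by rw [Qm_succ]; ring] at hlow
      have hmono := card_mono (Nat.div_mul_le_self n k)
      exact le_trans hlow hmono
    have h2 : ((n / k : ℕ):ℝ) * Real.log (Qm (m+1)) ≤ Real.log (CC n) := by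
      have hqp : (0:ℝ) < ((Qm (m+1) ^ (n/k) : ℕ):ℝ) := by
        exact_mod_cast pow_pos (Qm_pos (m+1)) (n/k)
      have h5 := Real.log_le_log hqp
        (show ((Qm (m+1) ^ (n/k) : ℕ):ℝ) ≤ (CC n : ℝ) by exact_mod_cast h1)
      rwa [Nat.cast_pow, Real.log_pow] at h5
    calc (((n / k : ℕ):ℝ)/n) * Real.log (Qm (m+1))
        = (((n / k : ℕ):ℝ) * Real.log (Qm (m+1)))/n := by ring
      _ ≤ Real.log (CC n)/n := (div_le_div_iff_of_pos_right hnpos).2 h2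
  have htend : Tendsto (fun n : ℕ => (((n / k : ℕ):ℝ) / n) * Real.log (Qm (m+1))) atTop
      (𝓝 ((1 / (k:ℝ)) * Real.log (Qm (m+1)))) := (tendsto_cast_div k hkpos).mul_const _
  have hlim : (1 / (k:ℝ)) * Real.log (Qm (m+1)) = sm (m+1) := by
    rw [log_Qm]
    have hkr : ((k:ℕ):ℝ) = 2 ^ (m+1) := by rw [hk]; push_cast; ring
    rw [hkr]
    field_simp
  have key : ∀ ε : ℝ, 0 < ε → sm (m+1) - ε ≤
      Filter.limsup (fun n : ℕ => Real.log (CC n) / n) atTop := by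
    intro ε hε
    have hlt : sm (m+1) - ε < (1 / (k:ℝ)) * Real.log (Qm (m+1)) := by
      rw [hlim]; linarith
    have hev2 := htend.eventually (eventually_ge_nhds hlt)
    have hfreq : ∃ᶠ n in atTop, sm (m+1) - ε ≤ Real.log (CC n)/n :=
      ((hev2.and hev).mono fun n hn => hn.1.trans hn.2).frequently
    exact Filter.le_limsup_of_frequently_le hfreq f_bddAbove
  apply le_of_forall_pos_le_add
  intro ε hε
  linarith [key ε hε]
/-- the topological entropy of the subshift of θ(a)={aa,ab}, θ(b)={ba}
equals Σ_{n=1}^∞ 2^{-n} log n. -/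
theorem theta2_entropy :
    topEntropy (substShift theta2) = ∑' n : ℕ, Real.log (n + 1) / 2 ^ (n + 1) := by
  have hfeq : (fun n : ℕ => Real.log (complexity (substShift theta2) n) / n)
      = fun n : ℕ => Real.log (CC n) / n := by
    funext n
    rw [complexity_eq]
    rfl
  unfold topEntropy
  rw [hfeq]
  have hle : Filter.limsup (fun n : ℕ => Real.log (CC n) / n) Filter.atTop ≤ Sval := by
    have hb := beta_tendsto
    rw [zero_add] at hb
    exact ge_of_tendsto hb (Filter.Eventually.of_forall E_le_beta)
  have hge : Sval ≤ Filter.limsup (fun n : ℕ => Real.log (CC n) / n) Filter.atTop := by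
    have h1 : Filter.Tendsto (fun m : ℕ => sm (m+1)) Filter.atTop (𝓝 Sval) :=
      sm_tendsto.comp (tendsto_add_atTop_nat 1)
    exact le_of_tendsto h1 (Filter.Eventually.of_forall sm_le_E)
  exact le_antisymm hle hge
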